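/- For all positive integers m and all x, k: the difference of rising factorials (x+k+m)^{\overline{m}} - (x+k)^{\overline{m}} equals the double sum over v from 0 to m-1 and i from 0 to m-v-1 of x^v * k^i * C_m(v,i), where C_m(v,i) = \sum_{j=i+1}^{m-v} m^{j-i} * S(m, v+j) * binom(v+j, v) * binom(j, i), with S denoting unsigned Stirling numbers of the first kind. -/

import Mathlib

/-- Unsigned Stirling numbers of the first kind: coefficients of the rising factorial. -/
noncomputable def stirling1 (m j : ℕ) : ℤ := (ascPochhammer ℤ m).coeff j

/-- The coefficients `C_m(v,i)` from the expansion of the difference of rising factorials. -/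
noncomputable def Ccoeff (m v i : ℕ) : ℤ :=
  ∑ j ∈ Finset.Icc (i + 1) (m - v),
    (m : ℤ) ^ (j - i) * stirling1 m (v + j) * (Nat.choose (v + j) v) * (Nat.choose j i)

open Finset in
/-- Reindexing of a triple sum: `(n, t, v) ↦ (v, t - v, n - v)`. -/
lemma triple_sum_reindex {M : Type*} [AddCommMonoid M] (m : ℕ) (f : ℕ → ℕ → ℕ → M) :
    ∑ n ∈ range (m + 1), ∑ t ∈ range n, ∑ v ∈ range (t + 1), f n t v
      = ∑ v ∈ range m, ∑ i ∈ range (m - v), ∑ j ∈ Icc (i + 1) (m - v), f (v + j) (v + i) v := by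
  have hL : (∑ n ∈ range (m + 1), ∑ t ∈ range n, ∑ v ∈ range (t + 1), f n t v)
      = ∑ p ∈ (range (m + 1)).sigma (fun n => (range n).sigma fun t => range (t + 1)),
          f p.1 p.2.1 p.2.2 := by
    rw [Finset.sum_sigma]
    exact Finset.sum_congr rfl fun n _ => by rw [Finset.sum_sigma]
  have hR : (∑ v ∈ range m, ∑ i ∈ range (m - v), ∑ j ∈ Icc (i + 1) (m - v), f (v + j) (v + i) v)
      = ∑ p ∈ (range m).sigma (fun v => (range (m - v)).sigma fun i => Icc (i + 1) (m - v)),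
          f (p.1 + p.2.2) (p.1 + p.2.1) p.1 := by
    rw [Finset.sum_sigma]
    exact Finset.sum_congr rfl fun v _ => by rw [Finset.sum_sigma]
  rw [hL, hR]
  refine Finset.sum_nbij' (fun p => ⟨p.2.2, ⟨p.2.1 - p.2.2, p.1 - p.2.2⟩⟩)
    (fun p => ⟨p.1 + p.2.2, ⟨p.1 + p.2.1, p.1⟩⟩) ?_ ?_ ?_ ?_ ?_
  · rintro ⟨n, t, v⟩ hp
    simp only [Finset.mem_sigma, Finset.mem_range, Finset.mem_Icc] at hp ⊢
    omega
  · rintro ⟨v, i, j⟩ hp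
    simp only [Finset.mem_sigma, Finset.mem_range, Finset.mem_Icc] at hp ⊢
    omega
  · rintro ⟨n, t, v⟩ hp
    simp only [Finset.mem_sigma, Finset.mem_range, Finset.mem_Icc] at hp
    have e1 : v + (n - v) = n := by omega
    have e2 : v + (t - v) = t := by omega
    simp [e1, e2]
  · rintro ⟨v, i, j⟩ hp
    simp only [Finset.mem_sigma, Finset.mem_range, Finset.mem_Icc] at hp
    have e1 : v + i - v = i := by omega
    have e2 : v + j - v = j := by omega
    simp [e1, e2]
  · rintro ⟨n, t, v⟩ hp
    simp only [Finset.mem_sigma, Finset.mem_range, Finset.mem_Icc] at hp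
    have h1 : v + (t - v) = t := by omega
    have h2 : v + (n - v) = n := by omega
    simp only [h1, h2]

open Finset in
theorem rising_factorial_difference_expansion
    {R : Type*} [CommRing R] (m : ℕ) (hm : 0 < m) (x k : R) :
    (ascPochhammer R m).eval (x + k + (m : R)) - (ascPochhammer R m).eval (x + k) =
      ∑ v ∈ Finset.range m, ∑ i ∈ Finset.range (m - v),
        x ^ v * k ^ i * ((Ccoeff m v i : ℤ) : R) := by
  have hdeg : (ascPochhammer R m).natDegree < m + 1 := by
    have h1 : ((ascPochhammer ℕ m).map (Nat.castRingHom R)).natDegree ≤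
        (ascPochhammer ℕ m).natDegree := Polynomial.natDegree_map_le
    rw [ascPochhammer_map, ascPochhammer_natDegree m (S := ℕ)] at h1
    omega
  have hcoeff : ∀ n, (ascPochhammer R m).coeff n = ((stirling1 m n : ℤ) : R) := by
    intro n
    rw [← ascPochhammer_map (Int.castRingHom R) m, Polynomial.coeff_map]
    simp [stirling1]
  rw [Polynomial.eval_eq_sum_range' hdeg, Polynomial.eval_eq_sum_range' hdeg,
    ← Finset.sum_sub_distrib]
  simp only [hcoeff]
  have expand : ∀ n : ℕ, (x + k + (m : R)) ^ n - (x + k) ^ n =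
      ∑ t ∈ range n, (x + k) ^ t * (m : R) ^ (n - t) * (Nat.choose n t : R) := by
    intro n
    rw [add_pow, Finset.sum_range_succ]
    simp
  have lhs_eq : ∀ n : ℕ,
      ((stirling1 m n : ℤ) : R) * (x + k + (m : R)) ^ n
        - ((stirling1 m n : ℤ) : R) * (x + k) ^ n
      = ∑ t ∈ range n, ∑ v ∈ range (t + 1),
          (fun n t v => ((stirling1 m n : ℤ) : R) * x ^ v * k ^ (t - v) * (Nat.choose t v : R)
            * (m : R) ^ (n - t) * (Nat.choose n t : R)) n t v := by
    intro n
    rw [← mul_sub, expand n, Finset.mul_sum]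
    refine Finset.sum_congr rfl fun t _ => ?_
    rw [add_pow, Finset.sum_mul, Finset.sum_mul, Finset.mul_sum]
    refine Finset.sum_congr rfl fun v _ => ?_
    ring
  simp only [lhs_eq]
  rw [triple_sum_reindex m]
  refine Finset.sum_congr rfl fun v hv => Finset.sum_congr rfl fun i hi => ?_
  simp only [Finset.mem_range] at hv hi
  rw [Ccoeff, Int.cast_sum, Finset.mul_sum]
  refine Finset.sum_congr rfl fun j hj => ?_
  simp only [Finset.mem_Icc] at hj
  have h1 : v + i - v = i := by omega
  have h2 : v + j - (v + i) = j - i := by omega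
  have h3 : Nat.choose (v + j) (v + i) * Nat.choose (v + i) v
      = Nat.choose (v + j) v * Nat.choose j i := by
    have := Nat.choose_mul (n := v + j) (k := v + i) (s := v) (by omega)
    simpa [h2, Nat.add_sub_cancel_left] using this
  have h4 : ((Nat.choose (v + j) (v + i) : R)) * (Nat.choose (v + i) v : R)
      = (Nat.choose (v + j) v : R) * (Nat.choose j i : R) := by
    exact_mod_cast congrArg (Nat.cast : ℕ → R) h3
  push_cast
  rw [h1, h2]
  calc ((stirling1 m (v + j) : ℤ) : R) * x ^ v * k ^ i * (Nat.choose (v + i) v : R)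
        * (m : R) ^ (j - i) * (Nat.choose (v + j) (v + i) : R)
      = ((stirling1 m (v + j) : ℤ) : R) * x ^ v * k ^ i * (m : R) ^ (j - i)
        * ((Nat.choose (v + j) (v + i) : R) * (Nat.choose (v + i) v : R)) := by ring
    _ = x ^ v * k ^ i * ((m : R) ^ (j - i) * ((stirling1 m (v + j) : ℤ) : R)
        * (Nat.choose (v + j) v : R) * (Nat.choose j i : R)) := by rw [h4]; ring
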